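/- n^(1/n) - ((n+1)/n^2) Σ_{r ≤ n} r^(1/n) → 0 as n → ∞. -/

import Mathlib

open Filter Real

theorem stmt_8 :
    Tendsto
      (fun n : ℕ =>
        (n : ℝ) ^ ((1 : ℝ) / n) -
          (((n : ℝ) + 1) / (n : ℝ) ^ 2) * ∑ r ∈ Finset.Icc 1 n, (r : ℝ) ^ ((1 : ℝ) / n))
      atTop (nhds 0) := by
  have ha : Tendsto (fun n : ℕ => (n : ℝ) ^ ((1:ℝ) / n)) atTop (nhds 1) := by
    have := tendsto_rpow_div.comp (tendsto_natCast_atTop_atTop (R := ℝ))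
    simpa [Function.comp_def] using this
  have hc : Tendsto (fun n : ℕ => ((n:ℝ)+1)/n) atTop (nhds 1) := by
    have h0 : Tendsto (fun n : ℕ => 1 + 1/(n:ℝ)) atTop (nhds 1) := by
      simpa using (tendsto_const_nhds (x := (1:ℝ))).add tendsto_one_div_atTop_nhds_zero_nat
    apply h0.congr'
    filter_upwards [eventually_ge_atTop 1] with n hn
    have hn0 : (n:ℝ) ≠ 0 := by
      have : (1:ℝ) ≤ n := by exact_mod_cast hn
      linarith
    field_simp
  have hL : Tendsto (fun n : ℕ => (n:ℝ)^((1:ℝ)/n) - ((n:ℝ)+1)/n * (n:ℝ)^((1:ℝ)/n))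
      atTop (nhds 0) := by
    have := ha.sub (hc.mul ha)
    simpa using this
  have hU : Tendsto (fun n : ℕ => (n:ℝ)^((1:ℝ)/n) - ((n:ℝ)+1)/n) atTop (nhds 0) := by
    have := ha.sub hc
    simpa using this
  refine tendsto_of_tendsto_of_tendsto_of_le_of_le' hL hU ?_ ?_
  · filter_upwards [eventually_ge_atTop 1] with n hn
    have hn0 : (0:ℝ) < n := by exact_mod_cast Nat.lt_of_lt_of_le Nat.zero_lt_one hn
    have hS : ∑ r ∈ Finset.Icc 1 n, (r:ℝ)^((1:ℝ)/n) ≤ n * (n:ℝ)^((1:ℝ)/n) := by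
      have h := Finset.sum_le_card_nsmul (Finset.Icc 1 n)
          (fun r => (r:ℝ)^((1:ℝ)/n)) ((n:ℝ)^((1:ℝ)/n)) ?_
      · simpa [Nat.card_Icc, nsmul_eq_mul] using h
      · intro r hr
        simp only [Finset.mem_Icc] at hr
        exact Real.rpow_le_rpow (by positivity) (by exact_mod_cast hr.2) (by positivity)
    have key : ((n:ℝ)+1)/(n:ℝ)^2 * ∑ r ∈ Finset.Icc 1 n, (r:ℝ)^((1:ℝ)/n)
        ≤ ((n:ℝ)+1)/n * (n:ℝ)^((1:ℝ)/n) := by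
      calc ((n:ℝ)+1)/(n:ℝ)^2 * ∑ r ∈ Finset.Icc 1 n, (r:ℝ)^((1:ℝ)/n)
          ≤ ((n:ℝ)+1)/(n:ℝ)^2 * ((n:ℝ) * (n:ℝ)^((1:ℝ)/n)) :=
            mul_le_mul_of_nonneg_left hS (by positivity)
        _ = ((n:ℝ)+1)/n * (n:ℝ)^((1:ℝ)/n) := by field_simp
    linarith
  · filter_upwards [eventually_ge_atTop 1] with n hn
    have hn0 : (0:ℝ) < n := by exact_mod_cast Nat.lt_of_lt_of_le Nat.zero_lt_one hn
    have hS : (n:ℝ) ≤ ∑ r ∈ Finset.Icc 1 n, (r:ℝ)^((1:ℝ)/n) := by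
      have h := Finset.card_nsmul_le_sum (Finset.Icc 1 n)
          (fun r => (r:ℝ)^((1:ℝ)/n)) 1 ?_
      · simpa [Nat.card_Icc, nsmul_eq_mul] using h
      · intro r hr
        simp only [Finset.mem_Icc] at hr
        exact Real.one_le_rpow (by exact_mod_cast hr.1) (by positivity)
    have key : ((n:ℝ)+1)/n ≤ ((n:ℝ)+1)/(n:ℝ)^2 * ∑ r ∈ Finset.Icc 1 n, (r:ℝ)^((1:ℝ)/n) := by
      calc ((n:ℝ)+1)/n = ((n:ℝ)+1)/(n:ℝ)^2 * n := by field_simp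
        _ ≤ ((n:ℝ)+1)/(n:ℝ)^2 * ∑ r ∈ Finset.Icc 1 n, (r:ℝ)^((1:ℝ)/n) :=
            mul_le_mul_of_nonneg_left hS (by positivity)
    linarith
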